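/- arXiv:2306.09685 — 2 statements merged into one kernel-verified Lean document; each statement's English description precedes it below -/
import Mathlib

section
/- Let A(t) be a continuous m×m matrix function with nonnegative off-diagonal entries and column sums ≤ -δ < 0, and let b ∈ ℝ^m with b ≥ 0. Then every solution of z' = A(t)z + b with nonnegative initial condition is ultimately bounded: there exists ρ > 0 (depending only on δ, ‖b‖, m) such that for each initial condition z₀ ≥ 0 there is t₀ with ‖z(t)‖ ≤ ρ for all t ≥ t₀. -/
open Set Filter Asymptotics
open scoped Topology

/-- Right derivative of `|g|` when `g` has a derivative. -/
lemma abs_hasDerivWithinAt_right {g : ℝ → ℝ} {d x : ℝ} (hg : HasDerivAt g d x) :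
    HasDerivWithinAt (fun t => |g t|)
      (if g x < 0 then -d else if g x = 0 then |d| else d) (Ici x) x := by
  rcases lt_trichotomy (g x) 0 with h | h | h
  · rw [if_pos h]
    have hev : ∀ᶠ t in 𝓝[Ici x] x, |g t| = -g t := by
      have : ∀ᶠ t in 𝓝 x, g t < 0 := hg.continuousAt.eventually_lt_const h
      filter_upwards [nhdsWithin_le_nhds (s := Ici x) this] with t ht
      exact abs_of_neg ht
    exact (hg.neg.hasDerivWithinAt).congr_of_eventuallyEq hev (abs_of_neg h)
  · rw [if_neg (by simp [h]), if_pos h]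
    rw [hasDerivWithinAt_iff_isLittleO]
    have h0 := hasDerivWithinAt_iff_isLittleO.1 (hg.hasDerivWithinAt (s := Ici x))
    rw [isLittleO_iff] at h0 ⊢
    intro c hc
    filter_upwards [h0 hc, self_mem_nhdsWithin] with t ht (htx : t ∈ Ici x)
    have h1 : (t - x) • |d| = |(t - x) • d| := by
      rw [smul_eq_mul, smul_eq_mul, abs_mul, abs_of_nonneg (sub_nonneg.2 htx)]
    calc ‖|g t| - |g x| - (t - x) • |d|‖ = ‖|g t| - |(t - x) • d|‖ := by
          rw [h, abs_zero, sub_zero, h1]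
      _ ≤ ‖g t - (t - x) • d‖ := by
          simpa using abs_abs_sub_abs_le_abs_sub (g t) ((t - x) • d)
      _ = ‖g t - g x - (t - x) • d‖ := by rw [h, sub_zero]
      _ ≤ c * ‖t - x‖ := ht
  · rw [if_neg (by linarith), if_neg (by linarith)]
    have hev : ∀ᶠ t in 𝓝[Ici x] x, |g t| = g t := by
      have : ∀ᶠ t in 𝓝 x, 0 < g t := hg.continuousAt.eventually_const_lt h
      filter_upwards [nhdsWithin_le_nhds (s := Ici x) this] with t ht
      exact abs_of_pos ht
    exact (hg.hasDerivWithinAt).congr_of_eventuallyEq hev (abs_of_pos h)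

open Finset in
/-- Let `A(t)` be a continuous `m×m` matrix function with nonnegative off-diagonal entries and
column sums `≤ -δ < 0`, and let `b ≥ 0`. Then there exists `ρ > 0` (depending only on the data)
such that every solution of `z' = A(t)z + b` with nonnegative initial condition is ultimately
bounded by `ρ`. -/
theorem cooperative_inhomogeneous_ode_ultimately_bounded
    (m : ℕ) (A : ℝ → Matrix (Fin m) (Fin m) ℝ)
    (hAcont : ∀ i j, Continuous fun t => A t i j)
    (hAoff : ∀ t, ∀ i j, i ≠ j → 0 ≤ A t j i)
    (δ : ℝ) (hδ : 0 < δ)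
    (hcol : ∀ t, ∀ i, ∑ j, A t j i ≤ -δ)
    (b : Fin m → ℝ) (hb : ∀ i, 0 ≤ b i) :
    ∃ ρ > 0, ∀ z : ℝ → Fin m → ℝ,
      (∀ i, ∀ t : ℝ, HasDerivAt (fun s => z s i) ((∑ j, A t i j * z t j) + b i) t) →
      (∀ i, 0 ≤ z 0 i) →
      ∃ t₀ : ℝ, ∀ t ≥ t₀, ∀ i, |z t i| ≤ ρ := by
  classical
  set B : ℝ := ∑ i, b i with hBdef
  have hB0 : 0 ≤ B := Finset.sum_nonneg fun i _ => hb i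
  refine ⟨B / δ + 1, by positivity, ?_⟩
  intro z hz _hz0
  set f : ℝ → ℝ := fun t => ∑ i, |z t i| with hfdef
  have hf0 : ∀ t, 0 ≤ f t := fun t => Finset.sum_nonneg fun i _ => abs_nonneg _
  have hzc : ∀ i, Continuous fun t => z t i := fun i =>
    continuous_iff_continuousAt.2 fun t => (hz i t).continuousAt
  have hfc : Continuous f := continuous_finset_sum _ fun i _ => (hzc i).abs
  set d : ℝ → Fin m → ℝ := fun x i => (∑ j, A x i j * z x j) + b i with hddef
  set F : ℝ → ℝ := fun x => ∑ i,
    if z x i < 0 then -(d x i) else if z x i = 0 then |d x i| else d x i with hFdef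
  have hF : ∀ x, HasDerivWithinAt f (F x) (Ici x) x := fun x =>
    HasDerivWithinAt.fun_sum fun i _ => abs_hasDerivWithinAt_right (hz i x)
  have hbound : ∀ x, F x ≤ -δ * f x + B := by
    intro x
    set s : Fin m → ℝ := fun i => if z x i < 0 then -1
      else if z x i = 0 then (if d x i < 0 then -1 else 1) else 1 with hsdef
    have hsD : ∀ i, (if z x i < 0 then -(d x i) else if z x i = 0 then |d x i| else d x i)
        = s i * d x i := by
      intro i
      by_cases h1 : z x i < 0
      · simp [hsdef, h1]
      · by_cases h2 : z x i = 0
        · by_cases h3 : d x i < 0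
          · simp [hsdef, h1, h2, h3, abs_of_neg h3]
          · simp [hsdef, h1, h2, h3, abs_of_nonneg (le_of_not_gt h3)]
        · simp [hsdef, h1, h2]
    have hsz : ∀ i, s i * z x i = |z x i| := by
      intro i
      by_cases h1 : z x i < 0
      · simp [hsdef, h1, abs_of_neg h1]
      · by_cases h2 : z x i = 0
        · simp [h2]
        · have : 0 < z x i := lt_of_le_of_ne (le_of_not_gt h1) (Ne.symm h2)
          simp [hsdef, h1, h2, abs_of_pos this]
    have hs1 : ∀ i, |s i| = 1 := by
      intro i
      by_cases h1 : z x i < 0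
      · simp [hsdef, h1]
      · by_cases h2 : z x i = 0
        · by_cases h3 : d x i < 0 <;> simp [hsdef, h1, h2, h3]
        · simp [hsdef, h1, h2]
    have key : F x = (∑ j, ∑ i, s i * (A x i j * z x j)) + ∑ i, s i * b i := by
      rw [hFdef]
      simp only [hsD]
      have hexp : ∀ i, s i * d x i = (∑ j, s i * (A x i j * z x j)) + s i * b i := by
        intro i; rw [hddef]; simp [mul_add, Finset.mul_sum]
      simp only [hexp]
      rw [Finset.sum_add_distrib, Finset.sum_comm]
    rw [key]
    have h1 : ∀ j, (∑ i, s i * (A x i j * z x j)) ≤ -δ * |z x j| := by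
      intro j
      have step : (∑ i, s i * (A x i j * z x j)) ≤ ∑ i, A x i j * |z x j| := by
        apply Finset.sum_le_sum
        intro i _
        rcases eq_or_ne i j with rfl | hij
        · have : s i * (A x i i * z x i) = A x i i * |z x i| := by rw [← hsz i]; ring
          exact this.le
        · have hA : 0 ≤ A x i j := hAoff x j i hij.symm
          calc s i * (A x i j * z x j) ≤ |s i * (A x i j * z x j)| := le_abs_self _
            _ = A x i j * |z x j| := by
                rw [abs_mul, hs1 i, one_mul, abs_mul, abs_of_nonneg hA]
      refine step.trans ?_
      rw [← Finset.sum_mul]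
      exact mul_le_mul_of_nonneg_right (hcol x j) (abs_nonneg _)
    have h2 : (∑ i, s i * b i) ≤ B := by
      apply Finset.sum_le_sum
      intro i _
      have : s i ≤ 1 := (le_abs_self _).trans (hs1 i).le
      nlinarith [hb i]
    calc (∑ j, ∑ i, s i * (A x i j * z x j)) + ∑ i, s i * b i
        ≤ (∑ j, -δ * |z x j|) + B := add_le_add (Finset.sum_le_sum fun j _ => h1 j) h2
      _ = -δ * f x + B := by rw [← Finset.mul_sum]
  have hKne : (-δ : ℝ) ≠ 0 := by linarith
  have key : ∀ t, 0 ≤ t → f t ≤ f 0 * Real.exp (-δ * t) + B / δ := by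
    intro t ht
    have hg := le_gronwallBound_of_liminf_deriv_right_le (f := f) (f' := F)
      (δ := f 0) (K := -δ) (ε := B) (a := 0) (b := t)
      hfc.continuousOn
      (fun x _ r hr => (hF x).liminf_right_slope_le hr)
      le_rfl (fun x _ => hbound x) t (Set.mem_Icc.2 ⟨ht, le_rfl⟩)
    rw [gronwallBound_of_K_ne_0 hKne] at hg
    simp only [sub_zero] at hg
    have he : 0 < Real.exp (-δ * t) := Real.exp_pos _
    have hBδ : 0 ≤ B / δ := by positivity
    have : B / -δ * (Real.exp (-δ * t) - 1) = B / δ * (1 - Real.exp (-δ * t)) := by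
      field_simp
      ring
    nlinarith [hg]
  refine ⟨max 0 (Real.log (f 0 + 1) / δ), fun t ht i => ?_⟩
  have ht0 : 0 ≤ t := le_trans (le_max_left _ _) ht
  have hf01 : 0 < f 0 + 1 := by linarith [hf0 0]
  have hlt : Real.log (f 0 + 1) ≤ δ * t := by
    have := le_trans (le_max_right 0 (Real.log (f 0 + 1) / δ)) ht
    rw [div_le_iff₀ hδ] at this
    linarith
  have hexp : Real.exp (-δ * t) ≤ (f 0 + 1)⁻¹ := by
    rw [← Real.exp_log (x := (f 0 + 1)⁻¹) (by positivity)]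
    apply Real.exp_le_exp.2
    rw [Real.log_inv]
    linarith
  have h1 : f 0 * Real.exp (-δ * t) ≤ 1 := by
    calc f 0 * Real.exp (-δ * t) ≤ f 0 * (f 0 + 1)⁻¹ :=
          mul_le_mul_of_nonneg_left hexp (hf0 0)
      _ ≤ 1 := by rw [mul_inv_le_iff₀ hf01]; linarith
  have hft : f t ≤ B / δ + 1 := by
    have := key t ht0
    linarith
  calc |z t i| ≤ f t := Finset.single_le_sum (fun j _ => abs_nonneg (z t j)) (mem_univ i)
    _ ≤ B / δ + 1 := hft
end

section
/- Consider the scalar delay equation y'(t) = -d(t)y(t) + β(t)·y(t-r)·e^{-c(t)y(t-r)} with d(t) ≥ d₀ > 0, c(t) ≥ c₀ > 0, β(t) ≤ β⁺, and a nonnegative solution y with initial segment φ ≥ 0. Then y(t) ≤ max(‖φ‖_∞, β⁺/(e·c₀·d₀)) for all t ≥ 0; in particular every nonnegative solution is bounded. -/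
lemma nicholson_aux_xexp (x : ℝ) : x * Real.exp (-x) ≤ 1 / Real.exp 1 := by
  have h := Real.add_one_le_exp (x - 1)
  have hx : Real.exp (x - 1) = Real.exp x / Real.exp 1 := Real.exp_sub x 1
  have hle : x ≤ Real.exp x / Real.exp 1 := by rw [hx] at h; linarith
  have h2 : x * Real.exp (-x) ≤ (Real.exp x / Real.exp 1) * Real.exp (-x) :=
    mul_le_mul_of_nonneg_right hle (Real.exp_pos _).le
  calc x * Real.exp (-x) ≤ (Real.exp x / Real.exp 1) * Real.exp (-x) := h2
    _ = 1 / Real.exp 1 := by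
        rw [Real.exp_neg]
        field_simp

/-- Boundedness of nonnegative solutions of the scalar Nicholson delay equation:
if `d(t) ≥ d₀ > 0`, `c(t) ≥ c₀ > 0`, `0 ≤ β(t) ≤ β⁺`, and `y` is a nonnegative solution with
initial segment bounded by `Φ`, then `y(t) ≤ max Φ (β⁺/(e·c₀·d₀))` for all `t ≥ 0`. -/
theorem nicholson_scalar_bounded
    (d β c : ℝ → ℝ) (d₀ c₀ βp : ℝ) (hd₀ : 0 < d₀) (hc₀ : 0 < c₀)
    (hd : ∀ t, d₀ ≤ d t) (hc : ∀ t, c₀ ≤ c t) (hβ : ∀ t, 0 ≤ β t) (hβp : ∀ t, β t ≤ βp)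
    (r : ℝ) (hr : 0 < r)
    (y : ℝ → ℝ) (hynn : ∀ t ≥ -r, 0 ≤ y t)
    (hode : ∀ t ≥ (0:ℝ),
      HasDerivAt y (-d t * y t + β t * y (t - r) * Real.exp (-c t * y (t - r))) t)
    (Φ : ℝ) (hΦ : ∀ s ∈ Set.Icc (-r) (0:ℝ), y s ≤ Φ) :
    ∀ t ≥ (0:ℝ), y t ≤ max Φ (βp / (Real.exp 1 * c₀ * d₀)) := by
  have hE : (0:ℝ) < Real.exp 1 := Real.exp_pos 1
  set Kd := βp / (Real.exp 1 * c₀ * d₀) with hKdDef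
  have hβp0 : 0 ≤ βp := le_trans (hβ 0) (hβp 0)
  -- key derivative bound
  have key : ∀ t ≥ (0:ℝ),
      -d t * y t + β t * y (t - r) * Real.exp (-c t * y (t - r)) ≤ d₀ * Kd - d₀ * y t := by
    intro t ht
    have hu : 0 ≤ y (t - r) := hynn _ (by linarith)
    set u := y (t - r) with hu_def
    have hyt : 0 ≤ y t := hynn t (by linarith)
    have h1 : -d t * y t ≤ -d₀ * y t := by nlinarith [hd t]
    have hexple : Real.exp (-c t * u) ≤ Real.exp (-(c₀ * u)) := by
      apply Real.exp_le_exp.2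
      nlinarith [hc t]
    have haux := nicholson_aux_xexp (c₀ * u)
    have h5 : u * Real.exp (-(c₀ * u)) ≤ 1 / (Real.exp 1 * c₀) := by
      have hthis : c₀ * (u * Real.exp (-(c₀ * u))) ≤ 1 / Real.exp 1 := by
        nlinarith [haux]
      have h5' := mul_le_mul_of_nonneg_right hthis hE.le
      have hone : (1 / Real.exp 1) * Real.exp 1 = 1 := by field_simp
      rw [le_div_iff₀ (by positivity : (0:ℝ) < Real.exp 1 * c₀)]
      nlinarith [h5', hone]
    have h6 : u * Real.exp (-c t * u) ≤ 1 / (Real.exp 1 * c₀) := by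
      calc u * Real.exp (-c t * u) ≤ u * Real.exp (-(c₀ * u)) :=
            mul_le_mul_of_nonneg_left hexple hu
        _ ≤ 1 / (Real.exp 1 * c₀) := h5
    have h7 : β t * (u * Real.exp (-c t * u)) ≤ βp * (1 / (Real.exp 1 * c₀)) := by
      apply mul_le_mul (hβp t) h6 (by positivity) hβp0
    have h8 : d₀ * Kd = βp * (1 / (Real.exp 1 * c₀)) := by
      rw [hKdDef]; field_simp
    calc -d t * y t + β t * u * Real.exp (-c t * u)
        ≤ -d₀ * y t + βp * (1 / (Real.exp 1 * c₀)) := by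
          have : β t * u * Real.exp (-c t * u) = β t * (u * Real.exp (-c t * u)) := by ring
          rw [this]; linarith
      _ = d₀ * Kd - d₀ * y t := by rw [h8]; ring
  -- comparison function
  set w : ℝ → ℝ := fun t => (y t - Kd) * Real.exp (d₀ * t) with hw
  have hwderiv : ∀ t ≥ (0:ℝ), HasDerivAt w
      ((-d t * y t + β t * y (t - r) * Real.exp (-c t * y (t - r))) * Real.exp (d₀ * t)
        + (y t - Kd) * (d₀ * Real.exp (d₀ * t))) t := by
    intro t ht
    have he : HasDerivAt (fun s => Real.exp (d₀ * s)) (d₀ * Real.exp (d₀ * t)) t := by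
      have := ((hasDerivAt_id t).const_mul d₀).exp
      simpa [mul_comm] using this
    exact ((hode t ht).sub_const Kd).mul he
  have hwanti : AntitoneOn w (Set.Ici (0:ℝ)) := by
    apply antitoneOn_of_deriv_nonpos (convex_Ici 0)
    · intro t ht
      exact (hwderiv t ht).continuousAt.continuousWithinAt
    · intro t ht
      rw [interior_Ici] at ht
      exact (hwderiv t (le_of_lt ht)).differentiableAt.differentiableWithinAt
    · intro t ht
      rw [interior_Ici] at ht
      have ht0 : (0:ℝ) ≤ t := le_of_lt ht
      rw [(hwderiv t ht0).deriv]
      have hk := key t ht0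
      have hep : (0:ℝ) < Real.exp (d₀ * t) := Real.exp_pos _
      nlinarith [hk, hep]
  intro t ht
  have hwt : w t ≤ w 0 := hwanti (Set.mem_Ici.2 le_rfl) (Set.mem_Ici.2 ht) ht
  have hy0 : y 0 ≤ Φ := hΦ 0 ⟨by linarith, le_rfl⟩
  have hw0 : w 0 = y 0 - Kd := by simp [hw]
  by_cases hcase : y t ≤ Kd
  · exact le_trans hcase (le_max_right _ _)
  · push_neg at hcase
    have hexp1 : (1:ℝ) ≤ Real.exp (d₀ * t) := by
      rw [← Real.exp_zero]
      exact Real.exp_le_exp.2 (by positivity)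
    have : y t - Kd ≤ (y t - Kd) * Real.exp (d₀ * t) := by
      nlinarith
    have : y t - Kd ≤ y 0 - Kd := by rw [hw0] at hwt; simp only [hw] at hwt; linarith [hwt]
    have : y t ≤ Φ := by linarith
    exact le_trans this (le_max_left _ _)
end
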